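/- Let E : ℝ → ℝ and ψ : ℝ → ℋ be functions with E(0) = E₀, ψ(0) = ψ₀, satisfying the eigenvalue equation (H + λW)ψ(λ) = E(λ)·ψ(λ) for all λ ∈ [0,δ) for some δ > 0, and suppose E and ψ are differentiable at 0 from within [0,δ). Then the one-sided derivative E′(0) equals the inner product ⟨ψ₀, Wψ₀⟩ (which is a real number since W is self-adjoint). -/

import Mathlib

open Set

/-- First-order perturbation of an eigenvalue branch: the one-sided derivative at `0`
of the eigenvalue branch equals `⟪ψ₀, W ψ₀⟫`. -/
theorem stmt_0 {ℋ : Type*} [NormedAddCommGroup ℋ] [InnerProductSpace ℂ ℋ] [CompleteSpace ℋ]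
    (H W : ℋ →L[ℂ] ℋ) (hH : IsSelfAdjoint H) (hW : IsSelfAdjoint W)
    (E₀ : ℝ) (ψ₀ : ℋ) (hψ₀ : ‖ψ₀‖ = 1) (hEig : H ψ₀ = (E₀ : ℂ) • ψ₀)
    (δ : ℝ) (hδ : 0 < δ)
    (E : ℝ → ℝ) (ψ : ℝ → ℋ) (hE0 : E 0 = E₀) (hψ0 : ψ 0 = ψ₀)
    (hBranch : ∀ lam ∈ Ico (0:ℝ) δ, (H + (lam : ℂ) • W) (ψ lam) = (E lam : ℂ) • ψ lam)
    (E' : ℝ) (hE' : HasDerivWithinAt E E' (Ico (0:ℝ) δ) 0)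
    (ψ' : ℋ) (hψ' : HasDerivWithinAt ψ ψ' (Ico (0:ℝ) δ) 0) :
    (E' : ℂ) = inner ℂ ψ₀ (W ψ₀) := by
  have h0mem : (0:ℝ) ∈ Ico (0:ℝ) δ := ⟨le_refl _, hδ⟩
  have hud : UniqueDiffWithinAt ℝ (Ico (0:ℝ) δ) 0 := uniqueDiffOn_Ico 0 δ 0 h0mem
  -- derivative of λ ↦ (λ : ℂ)
  have hcast : HasDerivWithinAt (fun lam : ℝ => (lam : ℂ)) 1 (Ico (0:ℝ) δ) 0 := by
    have := (Complex.ofRealCLM.hasDerivAt (x := (0:ℝ))).hasDerivWithinAt (s := Ico (0:ℝ) δ)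
    exact this
  -- derivative of λ ↦ W (ψ λ)
  have hWψ : HasDerivWithinAt (fun lam => W (ψ lam)) (W ψ') (Ico (0:ℝ) δ) 0 := by
    simpa [Function.comp_def] using HasFDerivAt.comp_hasDerivWithinAt (hf := hψ') (hl := (W.restrictScalars ℝ).hasFDerivAt)
  -- derivative of λ ↦ H (ψ λ)
  have hHψ : HasDerivWithinAt (fun lam => H (ψ lam)) (H ψ') (Ico (0:ℝ) δ) 0 := by
    simpa [Function.comp_def] using HasFDerivAt.comp_hasDerivWithinAt (hf := hψ') (hl := (H.restrictScalars ℝ).hasFDerivAt)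
  -- derivative of λ ↦ (λ:ℂ) • W (ψ λ)
  have hsmul : HasDerivWithinAt (fun lam : ℝ => (lam : ℂ) • W (ψ lam))
      (W ψ₀) (Ico (0:ℝ) δ) 0 := by
    have := hcast.smul hWψ
    simpa [hψ0, Pi.smul_def'] using this
  -- LHS function
  have hL : HasDerivWithinAt (fun lam : ℝ => (H + (lam : ℂ) • W) (ψ lam))
      (H ψ' + W ψ₀) (Ico (0:ℝ) δ) 0 := by
    have := hHψ.add hsmul
    simpa [ContinuousLinearMap.add_apply, ContinuousLinearMap.smul_apply, Pi.add_def] using this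
  -- derivative of λ ↦ (E λ : ℂ)
  have hEc : HasDerivWithinAt (fun lam : ℝ => (E lam : ℂ)) (E' : ℂ) (Ico (0:ℝ) δ) 0 := by
    simpa [Function.comp_def] using HasFDerivAt.comp_hasDerivWithinAt (hf := hE') (hl := Complex.ofRealCLM.hasFDerivAt)
  -- RHS function
  have hR : HasDerivWithinAt (fun lam : ℝ => (E lam : ℂ) • ψ lam)
      ((E₀ : ℂ) • ψ' + (E' : ℂ) • ψ₀) (Ico (0:ℝ) δ) 0 := by
    have := hEc.smul hψ'
    simpa [hE0, hψ0, Pi.smul_def'] using this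
  -- the two functions agree on the set, hence derivatives agree
  have hLR : HasDerivWithinAt (fun lam : ℝ => (H + (lam : ℂ) • W) (ψ lam))
      ((E₀ : ℂ) • ψ' + (E' : ℂ) • ψ₀) (Ico (0:ℝ) δ) 0 := by
    exact hR.congr (fun lam hlam => hBranch lam hlam) (hBranch 0 h0mem)
  have hdeq : H ψ' + W ψ₀ = (E₀ : ℂ) • ψ' + (E' : ℂ) • ψ₀ := by
    rw [← hL.derivWithin hud, ← hLR.derivWithin hud]
  -- take inner product with ψ₀
  have hinner := congrArg (fun v => (inner ℂ ψ₀ v : ℂ)) hdeq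
  simp only [inner_add_right, inner_smul_right] at hinner
  have hsym : (inner ℂ ψ₀ (H ψ') : ℂ) = (E₀ : ℂ) * inner ℂ ψ₀ ψ' := by
    have hsymm : (inner ℂ ψ₀ (H ψ') : ℂ) = inner ℂ (H ψ₀) ψ' :=
      ((ContinuousLinearMap.isSelfAdjoint_iff_isSymmetric.mp hH) ψ₀ ψ').symm
    rw [hsymm, hEig, inner_smul_left]
    simp
  have hnorm : (inner ℂ ψ₀ ψ₀ : ℂ) = 1 := by
    rw [inner_self_eq_norm_sq_to_K, hψ₀]; norm_num
  rw [hsym, hnorm, mul_one] at hinner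
  linear_combination -hinner
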